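/- In the q-boson algebra, let Z_α(μ) = ((b_+;q)_∞/(μ^{-1}b_+;q)_∞) k^{α_2} b_-^{α_1} for α=(α_1,α_2)∈Z_{≥0}^2 (infinite product ratio defined by its series expansion). Then the auxiliary condition Z_β(μ) Z_0(λ)^{-1} Z_γ(λ) = q^{φ(β,γ)} Z_{β+γ}(μ) holds for all β,γ ∈ Z_{≥0}^2, where φ(β,γ) = β_1 γ_2. -/

import Mathlib

open scoped BigOperators

noncomputable section

/-- The q-Pochhammer symbol `(z;q)_m = ∏_{j=0}^{m-1} (1 - z q^j)`. -/
def qP (q z : ℝ) (m : ℕ) : ℝ := ∏ j ∈ Finset.range m, (1 - z * q ^ j)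

/-- The Fock space `F = ⊕_{m≥0} ℂ|m⟩`, realized as coefficient sequences:
`v : ℕ → ℝ` stands for the vector `∑_m v m · |m⟩`. -/
abbrev Fock : Type := ℕ → ℝ

/-- The creation operator `b₊`, with `b₊|m⟩ = |m+1⟩`. -/
def Bp : Module.End ℝ Fock where
  toFun v := fun i => if i = 0 then 0 else v (i - 1)
  map_add' x y := by funext i; by_cases h : i = 0 <;> simp [h]
  map_smul' c x := by funext i; by_cases h : i = 0 <;> simp [h]

/-- The annihilation operator `b₋`, with `b₋|m⟩ = (1-q^m)|m-1⟩`. -/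
def Bm (q : ℝ) : Module.End ℝ Fock where
  toFun v := fun i => (1 - q ^ (i + 1)) * v (i + 1)
  map_add' x y := by funext i; simp [mul_add]
  map_smul' c x := by funext i; simp; ring

/-- The operator `k`, with `k|m⟩ = q^m|m⟩`. -/
def Kop (q : ℝ) : Module.End ℝ Fock where
  toFun v := fun i => q ^ i * v i
  map_add' x y := by funext i; simp [mul_add]
  map_smul' c x := by funext i; simp; ring

/-- The basis vector `|m⟩`. -/
def fock (m : ℕ) : Fock := fun i => if i = m then 1 else 0

/-- The trace `Tr(X) = ∑_{m≥0} ⟨m|X|m⟩/(q;q)_m`, with pairing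
`⟨m|m'⟩ = δ_{m,m'}(q;q)_m`; equivalently the sum of diagonal coefficients. -/
def Tr (X : Module.End ℝ Fock) : ℝ := ∑' m : ℕ, X (fock m) m

/-- Series coefficient of the ratio of infinite products
`(η b₊;q)_∞/(ζ b₊;q)_∞ = ∑_j ((η/ζ;q)_j/(q;q)_j)(ζ b₊)^j`:
the coefficient of `b₊^j` is `(∏_{t<j}(ζ - η q^t))/(q;q)_j`. -/
def ratioCoeff (q η ζ : ℝ) (j : ℕ) : ℝ :=
  (∏ t ∈ Finset.range j, (ζ - η * q ^ t)) / qP q q j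

/-- The operator `(η b₊;q)_∞/(ζ b₊;q)_∞ = ∑_j ratioCoeff j · b₊^j`,
a well-defined linear operator on the Fock space since `b₊` raises degree. -/
def Ratio (q η ζ : ℝ) : Module.End ℝ Fock where
  toFun v := fun i => ∑ j ∈ Finset.range (i + 1), ratioCoeff q η ζ j * v (i - j)
  map_add' x y := by
    funext i
    simp only [Pi.add_apply, mul_add, Finset.sum_add_distrib]
  map_smul' c x := by
    funext i
    simp only [Pi.smul_apply, smul_eq_mul, RingHom.id_apply, Finset.mul_sum]
    exact Finset.sum_congr rfl fun j _ => by ring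

/-- `Z_α(μ) = ((b₊;q)_∞/(μ^{-1}b₊;q)_∞) k^{α₂} b₋^{α₁}` for `α = (α₁,α₂)`. -/
def Zop (q mu : ℝ) (α : ℕ × ℕ) : Module.End ℝ Fock :=
  Ratio q 1 mu⁻¹ * (Kop q) ^ α.2 * (Bm q) ^ α.1

-- generic convolution operator
def opC (c : ℕ → ℝ) : Module.End ℝ Fock where
  toFun v := fun i => ∑ j ∈ Finset.range (i + 1), c j * v (i - j)
  map_add' x y := by
    funext i
    simp only [Pi.add_apply, mul_add, Finset.sum_add_distrib]
  map_smul' a x := by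
    funext i
    simp only [Pi.smul_apply, smul_eq_mul, RingHom.id_apply, Finset.mul_sum]
    exact Finset.sum_congr rfl fun j _ => by ring

lemma Ratio_eq_opC (q η ζ : ℝ) : Ratio q η ζ = opC (ratioCoeff q η ζ) := rfl

lemma opC_mul (c d : ℕ → ℝ) :
    opC c * opC d = opC (fun n => ∑ j ∈ Finset.range (n + 1), c j * d (n - j)) := by
  apply LinearMap.ext; intro v; funext i
  show (∑ j ∈ Finset.range (i + 1), c j *
      ∑ k ∈ Finset.range ((i - j) + 1), d k * v ((i - j) - k))
    = ∑ n ∈ Finset.range (i + 1),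
        (∑ j ∈ Finset.range (n + 1), c j * d (n - j)) * v (i - n)
  simp only [Finset.mul_sum, Finset.sum_mul]
  rw [Finset.sum_sigma', Finset.sum_sigma']
  apply Finset.sum_nbij' (fun p => ⟨p.1 + p.2, p.1⟩) (fun p => ⟨p.2, p.1 - p.2⟩)
  · rintro ⟨j, k⟩ h
    simp only [Finset.mem_sigma, Finset.mem_range] at h ⊢
    omega
  · rintro ⟨n, j⟩ h
    simp only [Finset.mem_sigma, Finset.mem_range] at h ⊢
    omega
  · rintro ⟨j, k⟩ h
    simp only [Finset.mem_sigma, Finset.mem_range] at h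
    have hk : j + k - j = k := by omega
    simp [hk]
  · rintro ⟨n, j⟩ h
    simp only [Finset.mem_sigma, Finset.mem_range] at h
    have hn : j + (n - j) = n := by omega
    simp [hn]
  · rintro ⟨j, k⟩ h
    simp only [Finset.mem_sigma, Finset.mem_range] at h
    have h1 : j + k - j = k := by omega
    have h2 : i - j - k = i - (j + k) := by omega
    rw [h1, h2]; ring

lemma qP_pos (q : ℝ) (hq0 : 0 < q) (hq1 : q < 1) (m : ℕ) : 0 < qP q q m := by
  unfold qP
  apply Finset.prod_pos
  intro j _
  have h1 : q * q ^ j < 1 := by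
    have := pow_le_one₀ hq0.le hq1.le (n := j)
    nlinarith
  linarith

lemma one_sub_pow_pos (q : ℝ) (hq0 : 0 < q) (hq1 : q < 1) (m : ℕ) :
    0 < 1 - q ^ (m + 1) := by
  have : q ^ (m + 1) < 1 := pow_lt_one₀ hq0.le hq1 (Nat.succ_ne_zero m)
  linarith

lemma rec_a (q x : ℝ) (hq0 : 0 < q) (hq1 : q < 1) (j : ℕ) :
    (1 - q ^ (j + 1)) * ratioCoeff q x 1 (j + 1) = (1 - x * q ^ j) * ratioCoeff q x 1 j := by
  have hQ : qP q q j ≠ 0 := (qP_pos q hq0 hq1 j).ne'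
  have h1 : (1 : ℝ) - q ^ (j + 1) ≠ 0 := (one_sub_pow_pos q hq0 hq1 j).ne'
  unfold ratioCoeff qP
  rw [Finset.prod_range_succ, Finset.prod_range_succ]
  have hqq : 1 - q * q ^ j = 1 - q ^ (j + 1) := by ring
  rw [hqq]
  unfold qP at hQ
  field_simp

lemma rec_b (q x : ℝ) (hq0 : 0 < q) (hq1 : q < 1) (j : ℕ) :
    (1 - q ^ (j + 1)) * ratioCoeff q 1 x (j + 1) = (x - q ^ j) * ratioCoeff q 1 x j := by
  have hQ : qP q q j ≠ 0 := (qP_pos q hq0 hq1 j).ne'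
  have h1 : (1 : ℝ) - q ^ (j + 1) ≠ 0 := (one_sub_pow_pos q hq0 hq1 j).ne'
  unfold ratioCoeff qP
  rw [Finset.prod_range_succ, Finset.prod_range_succ]
  have hqq : 1 - q * q ^ j = 1 - q ^ (j + 1) := by ring
  rw [hqq]
  unfold qP at hQ
  field_simp

lemma conv_step (q x : ℝ) (hq0 : 0 < q) (hq1 : q < 1) (n : ℕ) :
    (1 - q ^ (n + 1)) *
      (∑ j ∈ Finset.range (n + 2), ratioCoeff q x 1 j * ratioCoeff q 1 x (n + 1 - j))
    = (1 - q ^ n) *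
      (∑ j ∈ Finset.range (n + 1), ratioCoeff q x 1 j * ratioCoeff q 1 x (n - j)) := by
  set a := ratioCoeff q x 1 with ha
  set b := ratioCoeff q 1 x with hb
  rw [Finset.mul_sum]
  have split : ∀ j ∈ Finset.range (n + 2),
      (1 - q ^ (n + 1)) * (a j * b (n + 1 - j))
        = (1 - q ^ j) * a j * b (n + 1 - j)
          + q ^ j * ((1 - q ^ (n + 1 - j)) * (a j * b (n + 1 - j))) := by
    intro j hj
    rw [Finset.mem_range] at hj
    have hpow : q ^ j * q ^ (n + 1 - j) = q ^ (n + 1) := by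
      rw [← pow_add]
      congr 1
      omega
    linear_combination a j * b (n + 1 - j) * hpow
  rw [Finset.sum_congr rfl split, Finset.sum_add_distrib]
  have s1 : (∑ j ∈ Finset.range (n + 2), (1 - q ^ j) * a j * b (n + 1 - j))
      = ∑ j ∈ Finset.range (n + 1), (1 - x * q ^ j) * (a j * b (n - j)) := by
    rw [Finset.sum_range_succ']
    simp only [pow_zero, sub_self, zero_mul, add_zero]
    apply Finset.sum_congr rfl
    intro j hj
    have h1 : n + 1 - (j + 1) = n - j := by omega
    rw [h1, mul_assoc ((1:ℝ) - q ^ (j+1)), ← mul_assoc ((1:ℝ) - q ^ (j+1))]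
    rw [rec_a q x hq0 hq1 j]
    ring
  have s2 : (∑ j ∈ Finset.range (n + 2),
        q ^ j * ((1 - q ^ (n + 1 - j)) * (a j * b (n + 1 - j))))
      = ∑ j ∈ Finset.range (n + 1), q ^ j * ((x - q ^ (n - j)) * (a j * b (n - j))) := by
    rw [Finset.sum_range_succ]
    simp only [Nat.sub_self, pow_zero, sub_self, zero_mul, mul_zero, add_zero]
    apply Finset.sum_congr rfl
    intro j hj
    rw [Finset.mem_range] at hj
    have h1 : n + 1 - j = (n - j) + 1 := by omega
    rw [h1]
    have := rec_b q x hq0 hq1 (n - j)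
    calc q ^ j * ((1 - q ^ (n - j + 1)) * (a j * b (n - j + 1)))
        = q ^ j * (a j * ((1 - q ^ (n - j + 1)) * b (n - j + 1))) := by ring
      _ = q ^ j * (a j * ((x - q ^ (n - j)) * b (n - j))) := by rw [this]
      _ = q ^ j * ((x - q ^ (n - j)) * (a j * b (n - j))) := by ring
  rw [s1, s2, ← Finset.sum_add_distrib, Finset.mul_sum]
  apply Finset.sum_congr rfl
  intro j hj
  rw [Finset.mem_range] at hj
  have hpow : q ^ j * q ^ (n - j) = q ^ n := by
    rw [← pow_add]; congr 1; omega
  linear_combination -(a j * b (n - j)) * hpow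

lemma conv_zero (q x : ℝ) :
    (∑ j ∈ Finset.range 1, ratioCoeff q x 1 j * ratioCoeff q 1 x (0 - j)) = 1 := by
  simp [ratioCoeff, qP]

lemma conv_succ (q x : ℝ) (hq0 : 0 < q) (hq1 : q < 1) (n : ℕ) :
    (∑ j ∈ Finset.range (n + 2), ratioCoeff q x 1 j * ratioCoeff q 1 x (n + 1 - j)) = 0 := by
  induction n with
  | zero =>
      have h := conv_step q x hq0 hq1 0
      rw [conv_zero q x] at h
      have h1 : (1 : ℝ) - q ^ (0 + 1) ≠ 0 := (one_sub_pow_pos q hq0 hq1 0).ne'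
      simp only [pow_zero, sub_self, zero_mul] at h
      exact (mul_eq_zero.mp h).resolve_left h1
  | succ m ih =>
      have h := conv_step q x hq0 hq1 (m + 1)
      rw [ih, mul_zero] at h
      have h1 : (1 : ℝ) - q ^ (m + 1 + 1) ≠ 0 := (one_sub_pow_pos q hq0 hq1 (m + 1)).ne'
      exact (mul_eq_zero.mp h).resolve_left h1

lemma ratio_mul_ratio (q x : ℝ) (hq0 : 0 < q) (hq1 : q < 1) :
    Ratio q x 1 * Ratio q 1 x = 1 := by
  rw [Ratio_eq_opC, Ratio_eq_opC, opC_mul]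
  apply LinearMap.ext; intro v; funext i
  show (∑ j ∈ Finset.range (i + 1),
      (∑ t ∈ Finset.range (j + 1), ratioCoeff q x 1 t * ratioCoeff q 1 x (j - t)) * v (i - j))
    = v i
  rw [Finset.sum_eq_single 0]
  · simp [ratioCoeff, qP]
  · intro j hj hj0
    obtain ⟨m, rfl⟩ := Nat.exists_eq_succ_of_ne_zero hj0
    rw [conv_succ q x hq0 hq1 m, zero_mul]
  · intro h
    simp at h

lemma Bm_mul_Kop (q : ℝ) : Bm q * Kop q = q • (Kop q * Bm q) := by
  apply LinearMap.ext; intro v; funext i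
  show (1 - q ^ (i + 1)) * (q ^ (i + 1) * v (i + 1))
      = q * (q ^ i * ((1 - q ^ (i + 1)) * v (i + 1)))
  ring

lemma Bm_pow_mul_Kop (q : ℝ) (a : ℕ) :
    (Bm q) ^ a * Kop q = (q ^ a) • (Kop q * (Bm q) ^ a) := by
  induction a with
  | zero => simp
  | succ m ih =>
      rw [pow_succ, mul_assoc, Bm_mul_Kop, mul_smul_comm, ← mul_assoc, ih]
      rw [smul_mul_assoc, smul_smul, mul_assoc, ← pow_succ']

lemma Bm_pow_mul_Kop_pow (q : ℝ) (a c : ℕ) :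
    (Bm q) ^ a * (Kop q) ^ c = (q ^ (a * c)) • ((Kop q) ^ c * (Bm q) ^ a) := by
  induction c with
  | zero => simp
  | succ m ih =>
      rw [pow_succ, ← mul_assoc, ih, smul_mul_assoc, mul_assoc, Bm_pow_mul_Kop,
        mul_smul_comm, smul_smul, ← mul_assoc, ← pow_succ, ← pow_add]
      congr 2


/-- The auxiliary condition:
`Z_β(μ) Z_0(λ)^{-1} Z_γ(λ) = q^{φ(β,γ)} Z_{β+γ}(μ)` with `φ(β,γ) = β₁γ₂`,
where `Z_0(λ)^{-1} = (λ^{-1}b₊;q)_∞/(b₊;q)_∞`. -/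
theorem auxiliary_condition (q lam mu : ℝ) (hq0 : 0 < q) (hq1 : q < 1)
    (hlam : lam ≠ 0) (hmu : mu ≠ 0) (β γ : ℕ × ℕ) :
    Zop q mu β * Ratio q lam⁻¹ 1 * Zop q lam γ
      = (q ^ (β.1 * γ.2)) • Zop q mu (β + γ) := by
  unfold Zop
  have hinv : Ratio q lam⁻¹ 1 * Ratio q 1 lam⁻¹ = 1 :=
    ratio_mul_ratio q lam⁻¹ hq0 hq1
  calc Ratio q 1 mu⁻¹ * (Kop q) ^ β.2 * (Bm q) ^ β.1 * Ratio q lam⁻¹ 1 *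
        (Ratio q 1 lam⁻¹ * (Kop q) ^ γ.2 * (Bm q) ^ γ.1)
      = Ratio q 1 mu⁻¹ * (Kop q) ^ β.2 *
          ((Bm q) ^ β.1 * ((Ratio q lam⁻¹ 1 * Ratio q 1 lam⁻¹) *
            ((Kop q) ^ γ.2 * (Bm q) ^ γ.1))) := by
        simp only [mul_assoc]
    _ = Ratio q 1 mu⁻¹ * (Kop q) ^ β.2 *
          (((Bm q) ^ β.1 * (Kop q) ^ γ.2) * (Bm q) ^ γ.1) := by
        rw [hinv, one_mul]; simp only [mul_assoc]
    _ = Ratio q 1 mu⁻¹ * (Kop q) ^ β.2 *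
          ((q ^ (β.1 * γ.2)) • ((Kop q) ^ γ.2 * (Bm q) ^ β.1) * (Bm q) ^ γ.1) := by
        rw [Bm_pow_mul_Kop_pow]
    _ = (q ^ (β.1 * γ.2)) •
          (Ratio q 1 mu⁻¹ * (Kop q) ^ (β + γ).2 * (Bm q) ^ (β + γ).1) := by
        rw [smul_mul_assoc, mul_smul_comm]
        congr 1
        rw [Prod.snd_add, Prod.fst_add, pow_add, pow_add]
        simp only [mul_assoc]
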